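/- arXiv:2208.02625 — 5 statements merged into one kernel-verified Lean document; each statement's English description precedes it below -/
import Mathlib

section
/- Fix integers f ≥ 1 and g with 0 ≤ g ≤ f. Define H(f, g, μ_1, μ_d) = C(f,g) − C(f−μ_1, g−μ_1) − C(f−μ_d, g) + C(f−μ_1−μ_d, g−μ_1), where C(a,b) is the binomial coefficient (zero when b < 0 or b > a). Then ∑_{d=1}^{f} ∑_{μ_1+⋯+μ_d = f, μ_i ≥ 1} ((−1)^d / (μ_1! ⋯ μ_d!)) · H(f, g, μ_1, μ_d) = 0. (When d = 1, μ_1 = μ_d = f.) -/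
/-- Binomial coefficient on integers, interpreted as `0` when `b < 0` or `b > a`. -/
noncomputable def chooseZ (a b : ℤ) : ℝ :=
  if 0 ≤ b ∧ b ≤ a then (a.toNat.choose b.toNat : ℝ) else 0


open Finset

noncomputable def wt (l : List ℕ) : ℝ :=
  (-1) ^ l.length / ((l.map Nat.factorial).prod : ℝ)

lemma wt_nil : wt [] = 1 := by simp [wt]

lemma wt_cons (a : ℕ) (l : List ℕ) :
    wt (a :: l) = (-1) / (a.factorial : ℝ) * wt l := by
  have h1 : (a.factorial : ℝ) ≠ 0 := Nat.cast_ne_zero.2 a.factorial_ne_zero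
  have h2 : ((l.map Nat.factorial).prod : ℝ) ≠ 0 := by
    have : 0 < (l.map Nat.factorial).prod := by
      apply List.prod_pos
      intro x hx
      obtain ⟨y, hy, rfl⟩ := List.mem_map.mp hx
      exact y.factorial_pos
    positivity
  simp only [wt, List.length_cons, List.map_cons, List.prod_cons, pow_succ, Nat.cast_mul]
  field_simp

lemma wt_reverse (l : List ℕ) : wt l.reverse = wt l := by
  simp [wt, List.map_reverse, List.prod_reverse]

lemma neg_one_pow_sub {a n : ℕ} (h : a ≤ n) : (-1 : ℝ) ^ (n - a) = (-1) ^ n * (-1) ^ a := by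
  have : (-1 : ℝ) ^ (n - a) * ((-1) ^ a * (-1) ^ a) = (-1) ^ n * (-1) ^ a := by
    rw [← mul_assoc, ← pow_add, Nat.sub_add_cancel h, mul_comm ((-1 : ℝ)^n)]
  simpa [← mul_pow] using this

lemma Lkey (n : ℕ) (hn : 1 ≤ n) :
    ∑ a ∈ Icc 1 n, (-1 : ℝ) ^ a / (a.factorial * (n - a).factorial) = -1 / n.factorial := by
  have hfull : ∑ a ∈ range (n + 1), (-1 : ℝ) ^ a / (a.factorial * (n - a).factorial) = 0 := by
    have hz : ∑ a ∈ range (n + 1), (-1 : ℝ) ^ a * (n.choose a) = 0 := by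
      have := Int.alternating_sum_range_choose_of_ne (Nat.one_le_iff_ne_zero.mp hn)
      have := congrArg (fun z : ℤ => (z : ℝ)) this
      push_cast at this
      simpa using this
    have : ∀ a ∈ range (n + 1),
        (-1 : ℝ) ^ a / (a.factorial * (n - a).factorial) = ((-1 : ℝ) ^ a * (n.choose a)) / n.factorial := by
      intro a ha
      have haa : a ≤ n := Nat.lt_succ_iff.mp (mem_range.mp ha)
      have key := Nat.choose_mul_factorial_mul_factorial haa
      have : ((n.choose a : ℝ)) * (a.factorial * (n - a).factorial) = n.factorial := by
        have := congrArg (fun z : ℕ => (z : ℝ)) key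
        push_cast at this
        linarith [this]
      rw [div_eq_div_iff (by positivity) (by positivity)]
      rw [← this]; ring
    rw [Finset.sum_congr rfl this, ← Finset.sum_div, hz, zero_div]
  have hsplit : range (n + 1) = insert 0 (Icc 1 n) := by
    ext a; simp [Nat.lt_succ_iff]; omega
  rw [hsplit, Finset.sum_insert (by simp)] at hfull
  simp only [pow_zero, Nat.factorial_zero, Nat.sub_zero, Nat.cast_one, one_mul] at hfull
  have hnf : (n.factorial : ℝ) ≠ 0 := Nat.cast_ne_zero.2 n.factorial_ne_zero
  field_simp at hfull ⊢
  linarith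

lemma Mkey (m : ℕ) (hm : 1 ≤ m) :
    ∑ b ∈ Icc 1 m, (-1 : ℝ) ^ (m - b) / (b.factorial * (m - b).factorial)
      = -(-1) ^ m / m.factorial := by
  have : ∀ b ∈ Icc 1 m, (-1 : ℝ) ^ (m - b) / (b.factorial * (m - b).factorial)
      = (-1) ^ m * ((-1) ^ b / (b.factorial * (m - b).factorial)) := by
    intro b hb
    rw [neg_one_pow_sub (mem_Icc.mp hb).2]
    ring
  rw [Finset.sum_congr rfl this, ← Finset.mul_sum, Lkey m hm]
  ring

-- Composition structural lemmas

lemma comp_blocks_ne_nil {n : ℕ} (hn : 1 ≤ n) (c : Composition n) : c.blocks ≠ [] := by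
  intro h
  have hs := c.blocks_sum
  rw [h] at hs
  simp at hs
  omega

instance : Unique (Composition 0) where
  default := ⟨[], by simp, by simp⟩
  uniq c := by
    have hb : c.blocks = [] := by
      by_contra h
      have := List.sum_pos c.blocks (fun x hx => c.blocks_pos hx) h
      rw [c.blocks_sum] at this
      omega
    exact Composition.ext hb

def compCons {n a : ℕ} (ha : 1 ≤ a) (han : a ≤ n) (c : Composition (n - a)) : Composition n :=
  ⟨a :: c.blocks, by
      intro i hi
      rcases List.mem_cons.mp hi with rfl | hi
      · omega
      · exact c.blocks_pos hi,
    by rw [List.sum_cons, c.blocks_sum]; omega⟩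

lemma comp_headI_le {n : ℕ} (hn : 1 ≤ n) (c : Composition n) : c.blocks.headI ≤ n := by
  rcases hl : c.blocks with _ | ⟨a, t⟩
  · exact absurd hl (comp_blocks_ne_nil hn c)
  · have hs := c.blocks_sum
    rw [hl, List.sum_cons] at hs
    simp only [List.headI_cons]
    omega

lemma comp_one_le_headI {n : ℕ} (hn : 1 ≤ n) (c : Composition n) : 1 ≤ c.blocks.headI := by
  rcases hl : c.blocks with _ | ⟨a, t⟩
  · exact absurd hl (comp_blocks_ne_nil hn c)
  · simp only [List.headI_cons]
    exact c.blocks_pos (hl ▸ (List.mem_cons_self : a ∈ a :: t))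

def compTail {n : ℕ} (hn : 1 ≤ n) (c : Composition n) : Composition (n - c.blocks.headI) :=
  ⟨c.blocks.tail, fun hi => c.blocks_pos (List.mem_of_mem_tail hi), by
    rcases hl : c.blocks with _ | ⟨a, t⟩
    · exact absurd hl (comp_blocks_ne_nil hn c)
    · have hs := c.blocks_sum
      rw [hl, List.sum_cons] at hs
      simp only [hl, List.headI_cons, List.tail_cons]
      omega⟩

lemma sum_comp_split (n : ℕ) (hn : 1 ≤ n) (F : List ℕ → ℝ) :
    ∑ c : Composition n, F c.blocks
      = ∑ a ∈ Icc 1 n, ∑ c : Composition (n - a), F (a :: c.blocks) := by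
  rw [← Finset.sum_sigma (Icc 1 n) (fun a => (univ : Finset (Composition (n - a))))
      (fun x => F (x.1 :: x.2.blocks))]
  refine Finset.sum_bij'
    (fun (c : Composition n) _ => (⟨c.blocks.headI, compTail hn c⟩ :
      Σ a : ℕ, Composition (n - a)))
    (fun x hx => compCons (by
        simp only [Finset.mem_sigma, mem_Icc] at hx
        exact hx.1.1) (by
        simp only [Finset.mem_sigma, mem_Icc] at hx
        exact hx.1.2) x.2)
    ?hi ?hj ?left ?right ?h
  case hi =>
    intro c _
    simp only [Finset.mem_sigma, mem_Icc, Finset.mem_univ, and_true]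
    exact ⟨comp_one_le_headI hn c, comp_headI_le hn c⟩
  case hj =>
    intro x hx
    exact Finset.mem_univ _
  case left =>
    intro c _
    apply Composition.ext
    simp only [compCons, compTail]
    rcases hl : c.blocks with _ | ⟨a, t⟩
    · exact absurd hl (comp_blocks_ne_nil hn c)
    · simp [hl]
  case right =>
    intro x hx
    rcases x with ⟨a, c⟩
    apply Sigma.ext
    · simp [compCons]
    · simp only [compCons, compTail]
      apply heq_of_eq
      apply Composition.ext
      simp
  case h =>
    intro c _
    show F c.blocks = F (c.blocks.headI :: c.blocks.tail)
    rcases hl : c.blocks with _ | ⟨a, t⟩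
    · exact absurd hl (comp_blocks_ne_nil hn c)
    · simp

def compRev {n : ℕ} (c : Composition n) : Composition n :=
  ⟨c.blocks.reverse, fun hi => c.blocks_pos (List.mem_reverse.mp hi),
    by rw [List.sum_reverse, c.blocks_sum]⟩

lemma sum_comp_rev (n : ℕ) (F : List ℕ → ℝ) :
    ∑ c : Composition n, F c.blocks = ∑ c : Composition n, F c.blocks.reverse := by
  apply Fintype.sum_bijective (compRev : Composition n → Composition n)
  · apply Function.bijective_iff_has_inverse.mpr
    refine ⟨compRev, fun c => ?_, fun c => ?_⟩ <;>
      exact Composition.ext (by simp [compRev])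
  · intro c
    simp [compRev]

noncomputable def T (n : ℕ) : ℝ := ∑ c : Composition n, wt c.blocks

lemma T_zero : T 0 = 1 := by
  rw [T, Fintype.sum_unique]
  show wt [] = 1
  exact wt_nil

lemma T_eq (n : ℕ) : T n = (-1) ^ n / n.factorial := by
  induction n using Nat.strong_induction_on with
  | _ n ih =>
    rcases Nat.eq_zero_or_pos n with rfl | hn
    · simpa using T_zero
    · rw [T, sum_comp_split n hn]
      have step : ∀ a ∈ Icc 1 n,
          ∑ c : Composition (n - a), wt (a :: c.blocks)
            = (-1) / a.factorial * ((-1) ^ (n - a) / (n - a).factorial) := by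
        intro a ha
        rw [mem_Icc] at ha
        have : ∑ c : Composition (n - a), wt (a :: c.blocks)
            = (-1) / a.factorial * T (n - a) := by
          rw [T, Finset.mul_sum]
          exact Finset.sum_congr rfl fun c _ => wt_cons a c.blocks
        rw [this]
        congr 1
        rcases Nat.eq_zero_or_pos (n - a) with h0 | hpos
        · rw [h0, T_zero]
          norm_num
        · exact ih (n - a) (by omega)
      rw [Finset.sum_congr rfl step]
      have : ∀ a ∈ Icc 1 n, (-1 : ℝ) / a.factorial * ((-1) ^ (n - a) / (n - a).factorial)
          = -((-1) ^ (n - a) / (a.factorial * (n - a).factorial)) := by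
        intro a _
        field_simp
      rw [Finset.sum_congr rfl this, Finset.sum_neg_distrib, Mkey n hn]
      ring

lemma getLastD_cons_of_ne_nil {a : ℕ} {l : List ℕ} (h : l ≠ []) :
    (a :: l).getLastD 0 = l.getLastD 0 := by
  rcases l with _ | ⟨b, t⟩
  · exact absurd rfl h
  · simp [List.getLastD_cons]

lemma getLastD_reverse (l : List ℕ) : l.reverse.getLastD 0 = l.headI := by
  rw [List.getLastD_eq_getLast?, List.getLast?_reverse]
  rcases l with _ | ⟨a, t⟩ <;> simp

lemma sum_comp_of_zero {m : ℕ} (hm : m = 0) (F : Composition m → ℝ) :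
    F = F → ∑ c : Composition m, F c = F ⟨[], by simp, by simp [hm]⟩ := by
  subst hm
  intro _
  rw [Fintype.sum_unique]
  congr

lemma key_split (n : ℕ) (hn : 1 ≤ n) (G : ℕ → ℕ → ℝ) :
    ∑ c : Composition n, wt c.blocks * G c.blocks.headI (c.blocks.getLastD 0)
      = (-1) / n.factorial * G n n
        + ∑ a ∈ Icc 1 (n - 1), ∑ b ∈ Icc 1 (n - a),
            (-1) ^ (n - a - b) / (a.factorial * b.factorial * (n - a - b).factorial) * G a b := by
  rw [sum_comp_split n hn (fun l => wt l * G l.headI (l.getLastD 0))]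
  have hsplit : Icc 1 n = insert n (Icc 1 (n - 1)) := by
    ext x; simp only [mem_Icc, Finset.mem_insert]; omega
  rw [hsplit, Finset.sum_insert (by simp only [mem_Icc]; omega)]
  congr 1
  · -- a = n
    rw [sum_comp_of_zero (by omega) _ rfl]
    show wt (n :: []) * G (n :: []).headI ((n :: []).getLastD 0) = _
    rw [wt_cons, wt_nil]
    norm_num
  · apply Finset.sum_congr rfl
    intro a ha
    rw [mem_Icc] at ha
    have hna : 1 ≤ n - a := by omega
    have step1 : ∀ c : Composition (n - a),
        wt (a :: c.blocks) * G (a :: c.blocks).headI ((a :: c.blocks).getLastD 0)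
          = (-1) / a.factorial * (wt c.blocks * G a (c.blocks.getLastD 0)) := by
      intro c
      rw [wt_cons, getLastD_cons_of_ne_nil (comp_blocks_ne_nil hna c), List.headI_cons]
      ring
    rw [Finset.sum_congr rfl fun c _ => step1 c, ← Finset.mul_sum]
    have step2 : ∑ c : Composition (n - a), wt c.blocks * G a (c.blocks.getLastD 0)
        = ∑ c : Composition (n - a), wt c.blocks * G a c.blocks.headI := by
      rw [sum_comp_rev (n - a) (fun l => wt l * G a (l.getLastD 0))]
      exact Finset.sum_congr rfl fun c _ => by rw [wt_reverse, getLastD_reverse]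
    rw [step2, sum_comp_split (n - a) hna (fun l => wt l * G a l.headI)]
    have step3 : ∀ b ∈ Icc 1 (n - a),
        ∑ c : Composition (n - a - b), wt (b :: c.blocks) * G a (b :: c.blocks).headI
          = (-1) / b.factorial * ((-1) ^ (n - a - b) / (n - a - b).factorial) * G a b := by
      intro b hb
      have h1 : ∀ c : Composition (n - a - b),
          wt (b :: c.blocks) * G a (b :: c.blocks).headI
            = (-1) / b.factorial * G a b * wt c.blocks := by
        intro c
        rw [wt_cons, List.headI_cons]
        ring
      rw [Finset.sum_congr rfl fun c _ => h1 c, ← Finset.mul_sum, ← T, T_eq]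
      ring
    rw [Finset.sum_congr rfl step3, Finset.mul_sum]
    apply Finset.sum_congr rfl
    intro b hb
    ring

lemma inner_b (f a : ℕ) (ha1 : 1 ≤ a) (ha2 : a + 1 ≤ f) :
    ∑ b ∈ Icc 1 (f - a), (-1 : ℝ) ^ (f - a - b) / (a.factorial * b.factorial * (f - a - b).factorial)
      = -(-1) ^ (f - a) / (a.factorial * (f - a).factorial) := by
  have : ∀ b ∈ Icc 1 (f - a), (-1 : ℝ) ^ (f - a - b) / (a.factorial * b.factorial * (f - a - b).factorial)
      = 1 / a.factorial * ((-1) ^ (f - a - b) / (b.factorial * (f - a - b).factorial)) := by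
    intro b _
    ring
  rw [Finset.sum_congr rfl this, ← Finset.mul_sum, Mkey (f - a) (by omega)]
  field_simp

lemma tri_key (n : ℕ) (h : ℕ → ℕ → ℝ) :
    ∑ a ∈ Icc 1 (n - 1), ∑ b ∈ Icc 1 (n - a), h a b
      = ∑ a ∈ Icc 1 n, ∑ b ∈ Icc 1 n, if a + b ≤ n then h a b else 0 := by
  have inner : ∀ a, ∑ b ∈ Icc 1 n, (if a + b ≤ n then h a b else 0)
      = ∑ b ∈ Icc 1 (n - a), h a b := by
    intro a
    rw [← Finset.sum_filter]
    congr 1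
    ext b
    simp only [Finset.mem_filter, mem_Icc]
    omega
  rw [Finset.sum_congr rfl fun a _ => inner a]
  apply Finset.sum_subset
  · intro x hx
    rw [mem_Icc] at hx ⊢
    omega
  · intro x hx hx2
    rw [mem_Icc] at hx hx2
    have : n - x = 0 := by omega
    rw [this]
    simp

lemma tri_swap (n : ℕ) (h : ℕ → ℕ → ℝ) :
    ∑ a ∈ Icc 1 (n - 1), ∑ b ∈ Icc 1 (n - a), h a b
      = ∑ b ∈ Icc 1 (n - 1), ∑ a ∈ Icc 1 (n - b), h a b := by
  rw [tri_key n h, tri_key n (fun b a => h a b)]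
  rw [Finset.sum_comm]
  apply Finset.sum_congr rfl
  intro b _
  apply Finset.sum_congr rfl
  intro a _
  rw [Nat.add_comm a b]

lemma choose_fact_ratio {m k : ℕ} (h : k ≤ m) :
    ((m.choose k : ℝ)) / m.factorial = 1 / (k.factorial * (m - k).factorial) := by
  have key := Nat.choose_mul_factorial_mul_factorial h
  have : ((m.choose k : ℝ)) * (k.factorial * (m - k).factorial) = m.factorial := by
    have := congrArg (fun z : ℕ => (z : ℝ)) key
    push_cast at this
    linarith
  rw [div_eq_div_iff (by positivity) (by positivity), one_mul, ← this]

lemma chooseZ_of_le {a b : ℕ} (h : b ≤ a) : chooseZ (a : ℤ) (b : ℤ) = (a.choose b : ℝ) := by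
  rw [chooseZ, if_pos (by omega)]
  simp

lemma chooseZ_neg {a b : ℤ} (h : ¬(0 ≤ b ∧ b ≤ a)) : chooseZ a b = 0 := by
  rw [chooseZ, if_neg h]

lemma SW_val (f : ℕ) (hf : 1 ≤ f) :
    ∑ a ∈ Icc 1 (f - 1), ∑ b ∈ Icc 1 (f - a),
        (-1 : ℝ) ^ (f - a - b) / (a.factorial * b.factorial * (f - a - b).factorial)
      = ((-1) ^ f + 1) / f.factorial := by
  have h1 : ∀ a ∈ Icc 1 (f - 1),
      ∑ b ∈ Icc 1 (f - a), (-1 : ℝ) ^ (f - a - b) / (a.factorial * b.factorial * (f - a - b).factorial)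
        = -(-1) ^ (f - a) / (a.factorial * (f - a).factorial) := by
    intro a ha
    rw [mem_Icc] at ha
    exact inner_b f a ha.1 (by omega)
  rw [Finset.sum_congr rfl h1]
  have hfull : ∑ a ∈ Icc 1 f, -(-1 : ℝ) ^ (f - a) / (a.factorial * (f - a).factorial)
      = (-1) ^ f / f.factorial := by
    have : ∀ a ∈ Icc 1 f, -(-1 : ℝ) ^ (f - a) / (a.factorial * (f - a).factorial)
        = -((-1) ^ (f - a) / (a.factorial * (f - a).factorial)) := by
      intro a _; ring
    rw [Finset.sum_congr rfl this, Finset.sum_neg_distrib, Mkey f hf]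
    ring
  have hsplit : Icc 1 f = insert f (Icc 1 (f - 1)) := by
    ext x; simp only [mem_Icc, Finset.mem_insert]; omega
  rw [hsplit, Finset.sum_insert (by simp only [mem_Icc]; omega)] at hfull
  have hterm : -(-1 : ℝ) ^ (f - f) / (f.factorial * (f - f).factorial) = -1 / f.factorial := by
    rw [Nat.sub_self]
    norm_num
  rw [hterm] at hfull
  have hf0 : (f.factorial : ℝ) ≠ 0 := Nat.cast_ne_zero.2 f.factorial_ne_zero
  field_simp at hfull ⊢
  linarith

lemma SB_val (f g : ℕ) (hg1 : 1 ≤ g) (hgf : g + 1 ≤ f) :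
    ∑ a ∈ Icc 1 (f - 1), ∑ b ∈ Icc 1 (f - a),
        (-1 : ℝ) ^ (f - a - b) / (a.factorial * b.factorial * (f - a - b).factorial)
          * chooseZ ((f : ℤ) - a) ((g : ℤ) - a)
      = (-1) ^ f / (g.factorial * (f - g).factorial) := by
  have h1 : ∀ a ∈ Icc 1 (f - 1),
      ∑ b ∈ Icc 1 (f - a), (-1 : ℝ) ^ (f - a - b) / (a.factorial * b.factorial * (f - a - b).factorial)
          * chooseZ ((f : ℤ) - a) ((g : ℤ) - a)
        = -(-1) ^ (f - a) / (a.factorial * (f - a).factorial) * chooseZ ((f : ℤ) - a) ((g : ℤ) - a) := by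
    intro a ha
    rw [mem_Icc] at ha
    rw [← Finset.sum_mul, inner_b f a ha.1 (by omega)]
  rw [Finset.sum_congr rfl h1]
  rw [← Finset.sum_subset (Finset.Icc_subset_Icc_right (by omega) :
      Icc 1 g ⊆ Icc 1 (f - 1)) (by
    intro a ha ha2
    rw [mem_Icc] at ha ha2
    rw [chooseZ_neg (by omega), mul_zero])]
  have h2 : ∀ a ∈ Icc 1 g,
      -(-1 : ℝ) ^ (f - a) / (a.factorial * (f - a).factorial) * chooseZ ((f : ℤ) - a) ((g : ℤ) - a)
        = (-(-1) ^ f / (f - g).factorial) * ((-1) ^ a / (a.factorial * (g - a).factorial)) := by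
    intro a ha
    rw [mem_Icc] at ha
    rw [show ((f : ℤ) - a) = ((f - a : ℕ) : ℤ) by omega,
        show ((g : ℤ) - a) = ((g - a : ℕ) : ℤ) by omega,
        chooseZ_of_le (by omega)]
    have h3 : -(-1 : ℝ) ^ (f - a) / (a.factorial * (f - a).factorial) * ((f - a).choose (g - a))
        = -(-1) ^ (f - a) * (1 / a.factorial) * (((f - a).choose (g - a) : ℝ) / (f - a).factorial) := by
      ring
    rw [h3, choose_fact_ratio (by omega : g - a ≤ f - a),
        show (f - a) - (g - a) = f - g by omega, neg_one_pow_sub (by omega : a ≤ f)]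
    ring
  rw [Finset.sum_congr rfl h2, ← Finset.mul_sum, Lkey g hg1]
  have hg0 : ((g.factorial : ℝ)) ≠ 0 := Nat.cast_ne_zero.2 g.factorial_ne_zero
  have hfg0 : (((f - g).factorial : ℝ)) ≠ 0 := Nat.cast_ne_zero.2 (f - g).factorial_ne_zero
  field_simp

lemma inner_a (f b : ℕ) (hb1 : 1 ≤ b) (hb2 : b + 1 ≤ f) :
    ∑ a ∈ Icc 1 (f - b), (-1 : ℝ) ^ (f - a - b) / (a.factorial * b.factorial * (f - a - b).factorial)
      = -(-1) ^ (f - b) / (b.factorial * (f - b).factorial) := by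
  have h0 : ∀ a, f - a - b = f - b - a := by intro a; omega
  have : ∀ a ∈ Icc 1 (f - b), (-1 : ℝ) ^ (f - a - b) / (a.factorial * b.factorial * (f - a - b).factorial)
      = 1 / b.factorial * ((-1) ^ (f - b - a) / (a.factorial * (f - b - a).factorial)) := by
    intro a _
    rw [h0 a]
    ring
  rw [Finset.sum_congr rfl this, ← Finset.mul_sum, Mkey (f - b) (by omega)]
  field_simp

lemma SC_val (f g : ℕ) (hg1 : 1 ≤ g) (hgf : g + 1 ≤ f) :
    ∑ a ∈ Icc 1 (f - 1), ∑ b ∈ Icc 1 (f - a),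
        (-1 : ℝ) ^ (f - a - b) / (a.factorial * b.factorial * (f - a - b).factorial)
          * chooseZ ((f : ℤ) - b) (g : ℤ)
      = (-1) ^ f / (g.factorial * (f - g).factorial) := by
  rw [tri_swap f (fun a b => (-1 : ℝ) ^ (f - a - b) / (a.factorial * b.factorial * (f - a - b).factorial)
          * chooseZ ((f : ℤ) - b) (g : ℤ))]
  have h1 : ∀ b ∈ Icc 1 (f - 1),
      ∑ a ∈ Icc 1 (f - b), (-1 : ℝ) ^ (f - a - b) / (a.factorial * b.factorial * (f - a - b).factorial)
          * chooseZ ((f : ℤ) - b) (g : ℤ)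
        = -(-1) ^ (f - b) / (b.factorial * (f - b).factorial) * chooseZ ((f : ℤ) - b) (g : ℤ) := by
    intro b hb
    rw [mem_Icc] at hb
    rw [← Finset.sum_mul, inner_a f b hb.1 (by omega)]
  rw [Finset.sum_congr rfl h1]
  rw [← Finset.sum_subset (Finset.Icc_subset_Icc_right (by omega) :
      Icc 1 (f - g) ⊆ Icc 1 (f - 1)) (by
    intro b hb hb2
    rw [mem_Icc] at hb hb2
    rw [chooseZ_neg (by omega), mul_zero])]
  have h2 : ∀ b ∈ Icc 1 (f - g),
      -(-1 : ℝ) ^ (f - b) / (b.factorial * (f - b).factorial) * chooseZ ((f : ℤ) - b) (g : ℤ)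
        = (-(-1) ^ f / g.factorial) * ((-1) ^ b / (b.factorial * (f - g - b).factorial)) := by
    intro b hb
    rw [mem_Icc] at hb
    rw [show ((f : ℤ) - b) = ((f - b : ℕ) : ℤ) by omega, chooseZ_of_le (by omega)]
    have h3 : -(-1 : ℝ) ^ (f - b) / (b.factorial * (f - b).factorial) * ((f - b).choose g)
        = -(-1) ^ (f - b) * (1 / b.factorial) * (((f - b).choose g : ℝ) / (f - b).factorial) := by
      ring
    rw [h3, choose_fact_ratio (by omega : g ≤ f - b),
        show (f - b) - g = f - g - b by omega, neg_one_pow_sub (by omega : b ≤ f)]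
    ring
  rw [Finset.sum_congr rfl h2, ← Finset.mul_sum, Lkey (f - g) (by omega)]
  have hg0 : ((g.factorial : ℝ)) ≠ 0 := Nat.cast_ne_zero.2 g.factorial_ne_zero
  have hfg0 : (((f - g).factorial : ℝ)) ≠ 0 := Nat.cast_ne_zero.2 (f - g).factorial_ne_zero
  field_simp

lemma SD_val (f g : ℕ) (hg1 : 1 ≤ g) (hgf : g + 1 ≤ f) :
    ∑ a ∈ Icc 1 (f - 1), ∑ b ∈ Icc 1 (f - a),
        (-1 : ℝ) ^ (f - a - b) / (a.factorial * b.factorial * (f - a - b).factorial)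
          * chooseZ ((f : ℤ) - a - b) ((g : ℤ) - a)
      = (-1) ^ f / (g.factorial * (f - g).factorial) := by
  rw [← Finset.sum_subset (Finset.Icc_subset_Icc_right (by omega) :
      Icc 1 g ⊆ Icc 1 (f - 1)) (by
    intro a ha ha2
    rw [mem_Icc] at ha ha2
    apply Finset.sum_eq_zero
    intro b hb
    rw [chooseZ_neg (by omega), mul_zero])]
  have h1 : ∀ a ∈ Icc 1 g,
      ∑ b ∈ Icc 1 (f - a), (-1 : ℝ) ^ (f - a - b) / (a.factorial * b.factorial * (f - a - b).factorial)
          * chooseZ ((f : ℤ) - a - b) ((g : ℤ) - a)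
        = ((-1) ^ f * ((-1) ^ a / (a.factorial * (g - a).factorial))) * (-1 / (f - g).factorial) := by
    intro a ha
    rw [mem_Icc] at ha
    rw [← Finset.sum_subset (Finset.Icc_subset_Icc_right (by omega) :
        Icc 1 (f - g) ⊆ Icc 1 (f - a)) (by
      intro b hb hb2
      rw [mem_Icc] at hb hb2
      rw [chooseZ_neg (by omega), mul_zero])]
    have h2 : ∀ b ∈ Icc 1 (f - g),
        (-1 : ℝ) ^ (f - a - b) / (a.factorial * b.factorial * (f - a - b).factorial)
            * chooseZ ((f : ℤ) - a - b) ((g : ℤ) - a)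
          = ((-1) ^ f * ((-1) ^ a / (a.factorial * (g - a).factorial)))
              * ((-1) ^ b / (b.factorial * (f - g - b).factorial)) := by
      intro b hb
      rw [mem_Icc] at hb
      rw [show ((f : ℤ) - a - b) = ((f - a - b : ℕ) : ℤ) by omega,
          show ((g : ℤ) - a) = ((g - a : ℕ) : ℤ) by omega,
          chooseZ_of_le (by omega)]
      have hpow : (-1 : ℝ) ^ (f - a - b) = (-1) ^ f * ((-1) ^ a * (-1) ^ b) := by
        rw [show f - a - b = f - (a + b) by omega, neg_one_pow_sub (by omega : a + b ≤ f), pow_add]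
      have h3 : (-1 : ℝ) ^ (f - a - b) / (a.factorial * b.factorial * (f - a - b).factorial)
            * ((f - a - b).choose (g - a))
          = (-1) ^ (f - a - b) * (1 / (a.factorial * b.factorial))
              * (((f - a - b).choose (g - a) : ℝ) / (f - a - b).factorial) := by
        ring
      rw [h3, choose_fact_ratio (by omega : g - a ≤ f - a - b),
          show (f - a - b) - (g - a) = f - g - b by omega, hpow]
      ring
    rw [Finset.sum_congr rfl h2, ← Finset.mul_sum, Lkey (f - g) (by omega)]
  rw [Finset.sum_congr rfl h1]
  have h4 : ∑ a ∈ Icc 1 g, ((-1 : ℝ) ^ f * ((-1) ^ a / (a.factorial * (g - a).factorial))) * (-1 / (f - g).factorial)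
      = ((-1) ^ f * (-1 / (f - g).factorial)) * ∑ a ∈ Icc 1 g, (-1 : ℝ) ^ a / (a.factorial * (g - a).factorial) := by
    rw [Finset.mul_sum]
    exact Finset.sum_congr rfl fun a _ => by ring
  rw [h4, Lkey g hg1]
  have hg0 : ((g.factorial : ℝ)) ≠ 0 := Nat.cast_ne_zero.2 g.factorial_ne_zero
  have hfg0 : (((f - g).factorial : ℝ)) ≠ 0 := Nat.cast_ne_zero.2 (f - g).factorial_ne_zero
  field_simp

lemma comp_block_le {n : ℕ} (c : Composition n) {x : ℕ} (hx : x ∈ c.blocks) : x ≤ n := by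
  have := List.single_le_sum (l := c.blocks) (fun y _ => Nat.zero_le y) x hx
  rw [c.blocks_sum] at this
  exact this

lemma comp_getLastD_mem {n : ℕ} (hn : 1 ≤ n) (c : Composition n) :
    c.blocks.getLastD 0 ∈ c.blocks := by
  have h := getLastD_reverse c.blocks.reverse
  rw [List.reverse_reverse] at h
  rw [h]
  have hne : c.blocks.reverse ≠ [] := by
    simp only [ne_eq, List.reverse_eq_nil_iff]
    exact comp_blocks_ne_nil hn c
  rcases hl : c.blocks.reverse with _ | ⟨a, t⟩
  · exact absurd hl hne
  · have ha : a ∈ c.blocks.reverse := hl ▸ (List.mem_cons_self : a ∈ a :: t)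
    simpa using List.mem_reverse.mp ha

lemma comp_headI_mem {n : ℕ} (hn : 1 ≤ n) (c : Composition n) :
    c.blocks.headI ∈ c.blocks := by
  rcases hl : c.blocks with _ | ⟨a, t⟩
  · exact absurd hl (comp_blocks_ne_nil hn c)
  · rw [List.headI_cons]
    exact hl ▸ (List.mem_cons_self : a ∈ a :: t)


/-- the alternating composition sum of
`H(f,g,μ_1,μ_d) = C(f,g) − C(f−μ_1,g−μ_1) − C(f−μ_d,g) + C(f−μ_1−μ_d,g−μ_1)` vanishes. -/
theorem composition_sum_H_vanishes (f g : ℕ) (hf : 1 ≤ f) (hg : g ≤ f) :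
    ∑ c : Composition f,
        ((-1 : ℝ) ^ c.length / ((c.blocks.map Nat.factorial).prod : ℝ)) *
          (chooseZ (f : ℤ) (g : ℤ)
            - chooseZ ((f : ℤ) - (c.blocks.headI : ℤ)) ((g : ℤ) - (c.blocks.headI : ℤ))
            - chooseZ ((f : ℤ) - (c.blocks.getLastD 0 : ℤ)) (g : ℤ)
            + chooseZ ((f : ℤ) - (c.blocks.headI : ℤ) - (c.blocks.getLastD 0 : ℤ))
                ((g : ℤ) - (c.blocks.headI : ℤ)))
      = 0 := by
  classical
  set G : ℕ → ℕ → ℝ := fun a b =>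
    chooseZ (f : ℤ) (g : ℤ)
      - chooseZ ((f : ℤ) - (a : ℤ)) ((g : ℤ) - (a : ℤ))
      - chooseZ ((f : ℤ) - (b : ℤ)) (g : ℤ)
      + chooseZ ((f : ℤ) - (a : ℤ) - (b : ℤ)) ((g : ℤ) - (a : ℤ)) with hGdef
  have hrw : ∀ c : Composition f,
      ((-1 : ℝ) ^ c.length / ((c.blocks.map Nat.factorial).prod : ℝ)) *
          (chooseZ (f : ℤ) (g : ℤ)
            - chooseZ ((f : ℤ) - (c.blocks.headI : ℤ)) ((g : ℤ) - (c.blocks.headI : ℤ))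
            - chooseZ ((f : ℤ) - (c.blocks.getLastD 0 : ℤ)) (g : ℤ)
            + chooseZ ((f : ℤ) - (c.blocks.headI : ℤ) - (c.blocks.getLastD 0 : ℤ))
                ((g : ℤ) - (c.blocks.headI : ℤ)))
        = wt c.blocks * G c.blocks.headI (c.blocks.getLastD 0) := by
    intro c
    rfl
  rw [Finset.sum_congr rfl fun c _ => hrw c]
  -- bounds for blocks
  have hbound : ∀ c : Composition f,
      1 ≤ c.blocks.headI ∧ c.blocks.headI ≤ f ∧
        1 ≤ c.blocks.getLastD 0 ∧ c.blocks.getLastD 0 ≤ f := by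
    intro c
    refine ⟨c.blocks_pos (comp_headI_mem hf c), comp_block_le c (comp_headI_mem hf c),
      c.blocks_pos (comp_getLastD_mem hf c), comp_block_le c (comp_getLastD_mem hf c)⟩
  by_cases hg0 : g = 0
  · subst hg0
    apply Finset.sum_eq_zero
    intro c _
    obtain ⟨h1, h2, h3, h4⟩ := hbound c
    have e1 : chooseZ (f : ℤ) ((0 : ℕ) : ℤ) = 1 := by
      rw [chooseZ, if_pos (by omega)]
      simp
    have e2 : chooseZ ((f : ℤ) - (c.blocks.headI : ℤ)) (((0 : ℕ) : ℤ) - (c.blocks.headI : ℤ)) = 0 :=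
      chooseZ_neg (by omega)
    have e3 : chooseZ ((f : ℤ) - (c.blocks.getLastD 0 : ℤ)) ((0 : ℕ) : ℤ) = 1 := by
      rw [chooseZ, if_pos (by omega)]
      simp
    have e4 : chooseZ ((f : ℤ) - (c.blocks.headI : ℤ) - (c.blocks.getLastD 0 : ℤ))
        (((0 : ℕ) : ℤ) - (c.blocks.headI : ℤ)) = 0 := chooseZ_neg (by omega)
    rw [hGdef]
    simp only [e1, e2, e3, e4]
    ring
  · by_cases hgf : g = f
    · subst hgf
      apply Finset.sum_eq_zero
      intro c _
      obtain ⟨h1, h2, h3, h4⟩ := hbound c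
      have e1 : chooseZ (g : ℤ) (g : ℤ) = 1 := by
        rw [chooseZ, if_pos (by omega)]
        simp
      have e2 : chooseZ ((g : ℤ) - (c.blocks.headI : ℤ)) ((g : ℤ) - (c.blocks.headI : ℤ)) = 1 := by
        rw [chooseZ, if_pos (by omega)]
        simp [Nat.choose_self]
      have e3 : chooseZ ((g : ℤ) - (c.blocks.getLastD 0 : ℤ)) (g : ℤ) = 0 :=
        chooseZ_neg (by omega)
      have e4 : chooseZ ((g : ℤ) - (c.blocks.headI : ℤ) - (c.blocks.getLastD 0 : ℤ))
          ((g : ℤ) - (c.blocks.headI : ℤ)) = 0 := chooseZ_neg (by omega)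
      rw [hGdef]
      simp only [e1, e2, e3, e4]
      ring
    · -- middle case
      have hg1 : 1 ≤ g := by omega
      have hgf1 : g + 1 ≤ f := by omega
      rw [key_split f hf G]
      have hGff : G f f = (f.choose g : ℝ) := by
        rw [hGdef]
        simp only
        rw [chooseZ_neg (a := (f : ℤ) - f) (b := (g : ℤ) - f) (by omega),
            chooseZ_neg (a := (f : ℤ) - f) (b := (g : ℤ)) (by omega),
            chooseZ_neg (a := (f : ℤ) - f - f) (b := (g : ℤ) - f) (by omega),
            chooseZ_of_le hg]
        ring
      have hdist : ∑ a ∈ Icc 1 (f - 1), ∑ b ∈ Icc 1 (f - a),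
          (-1 : ℝ) ^ (f - a - b) / (a.factorial * b.factorial * (f - a - b).factorial) * G a b
        = (∑ a ∈ Icc 1 (f - 1), ∑ b ∈ Icc 1 (f - a),
            (-1 : ℝ) ^ (f - a - b) / (a.factorial * b.factorial * (f - a - b).factorial))
              * chooseZ (f : ℤ) (g : ℤ)
          - (∑ a ∈ Icc 1 (f - 1), ∑ b ∈ Icc 1 (f - a),
              (-1 : ℝ) ^ (f - a - b) / (a.factorial * b.factorial * (f - a - b).factorial)
                * chooseZ ((f : ℤ) - a) ((g : ℤ) - a))
          - (∑ a ∈ Icc 1 (f - 1), ∑ b ∈ Icc 1 (f - a),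
              (-1 : ℝ) ^ (f - a - b) / (a.factorial * b.factorial * (f - a - b).factorial)
                * chooseZ ((f : ℤ) - b) (g : ℤ))
          + (∑ a ∈ Icc 1 (f - 1), ∑ b ∈ Icc 1 (f - a),
              (-1 : ℝ) ^ (f - a - b) / (a.factorial * b.factorial * (f - a - b).factorial)
                * chooseZ ((f : ℤ) - a - b) ((g : ℤ) - a)) := by
        rw [Finset.sum_mul, ← Finset.sum_sub_distrib, ← Finset.sum_sub_distrib,
            ← Finset.sum_add_distrib]
        apply Finset.sum_congr rfl
        intro a _
        rw [Finset.sum_mul, ← Finset.sum_sub_distrib, ← Finset.sum_sub_distrib,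
            ← Finset.sum_add_distrib]
        apply Finset.sum_congr rfl
        intro b _
        rw [hGdef]
        ring
      rw [hdist, SW_val f hf, SB_val f g hg1 hgf1, SC_val f g hg1 hgf1, SD_val f g hg1 hgf1,
          hGff, chooseZ_of_le hg]
      have key : ((f.choose g : ℝ)) * (g.factorial * (f - g).factorial) = f.factorial := by
        have := congrArg (fun z : ℕ => (z : ℝ)) (Nat.choose_mul_factorial_mul_factorial hg)
        push_cast at this
        linarith
      have hf0 : (f.factorial : ℝ) ≠ 0 := Nat.cast_ne_zero.2 f.factorial_ne_zero
      have hg0' : ((g.factorial : ℝ)) ≠ 0 := Nat.cast_ne_zero.2 g.factorial_ne_zero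
      have hfg0 : (((f - g).factorial : ℝ)) ≠ 0 := Nat.cast_ne_zero.2 (f - g).factorial_ne_zero
      field_simp
      linear_combination ((-1 : ℝ) ^ f) * key
end

section
/- Let n ≥ 1 and 1 ≤ f < n be integers. Then ∑_{c,d ≥ 0, c+d ≤ n} (−1)^{c+d} · C(n−c, f−c) / ((n−c−d)! c! d!) = 0, where C(a,b) = 0 when b < 0 or b > a. -/
lemma aux_alt (m : ℕ) (hm : m ≠ 0) :
    ∑ d ∈ Finset.range (m + 1),
      (-1 : ℝ) ^ d / (((m - d).factorial : ℝ) * (d.factorial : ℝ)) = 0 := by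
  have h : ∀ d ∈ Finset.range (m + 1),
      (-1 : ℝ) ^ d / (((m - d).factorial : ℝ) * (d.factorial : ℝ))
        = ((-1 : ℝ) ^ d * (m.choose d : ℝ)) / (m.factorial : ℝ) := by
    intro d hd
    rw [Finset.mem_range, Nat.lt_succ_iff] at hd
    have key : (m.choose d : ℝ) * ((d.factorial : ℝ) * ((m - d).factorial : ℝ))
        = (m.factorial : ℝ) := by
      rw [← mul_assoc]
      exact_mod_cast congrArg (Nat.cast (R := ℝ))
        (Nat.choose_mul_factorial_mul_factorial hd)
    have h1 : ((m - d).factorial : ℝ) ≠ 0 := Nat.cast_ne_zero.mpr (Nat.factorial_ne_zero _)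
    have h2 : (d.factorial : ℝ) ≠ 0 := Nat.cast_ne_zero.mpr (Nat.factorial_ne_zero _)
    have h3 : (m.factorial : ℝ) ≠ 0 := Nat.cast_ne_zero.mpr (Nat.factorial_ne_zero _)
    field_simp
    rw [mul_comm ((m - d).factorial : ℝ) (d.factorial : ℝ), ← key]
    ring
  rw [Finset.sum_congr rfl h, ← Finset.sum_div]
  have : ∑ d ∈ Finset.range (m + 1), (-1 : ℝ) ^ d * (m.choose d : ℝ) = 0 := by
    have := Int.alternating_sum_range_choose (n := m)
    rw [if_neg hm] at this
    have := congrArg (fun z : ℤ => (z : ℝ)) this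
    push_cast at this
    convert this using 2
  rw [this, zero_div]

/-- the vanishing of `G_2(n,f)` for `1 ≤ f < n`. -/
theorem G2_vanishes (n f : ℕ) (hf1 : 1 ≤ f) (hf2 : f < n) :
    ∑ c ∈ Finset.range (n + 1), ∑ d ∈ Finset.range (n + 1 - c),
        (-1 : ℝ) ^ (c + d) * chooseZ ((n : ℤ) - c) ((f : ℤ) - c) /
          (((n - c - d).factorial : ℝ) * (c.factorial : ℝ) * (d.factorial : ℝ))
      = 0 := by
  apply Finset.sum_eq_zero
  intro c hc
  rw [Finset.mem_range, Nat.lt_succ_iff] at hc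
  rcases eq_or_lt_of_le hc with rfl | hlt
  · apply Finset.sum_eq_zero
    intro d _
    have : chooseZ ((c : ℤ) - c) ((f : ℤ) - c) = 0 := by
      rw [chooseZ, if_neg]
      rintro ⟨h1, h2⟩
      omega
    rw [this, mul_zero, zero_div]
  · set m := n - c with hm
    have hm0 : m ≠ 0 := by omega
    have hrange : n + 1 - c = m + 1 := by omega
    have hsub : ∀ d, n - c - d = m - d := fun d => rfl
    rw [hrange]
    have : ∀ d ∈ Finset.range (m + 1),
        (-1 : ℝ) ^ (c + d) * chooseZ ((n : ℤ) - c) ((f : ℤ) - c) /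
          (((n - c - d).factorial : ℝ) * (c.factorial : ℝ) * (d.factorial : ℝ))
          = ((-1 : ℝ) ^ c * chooseZ ((n : ℤ) - c) ((f : ℤ) - c) / (c.factorial : ℝ)) *
            ((-1 : ℝ) ^ d / (((m - d).factorial : ℝ) * (d.factorial : ℝ))) := by
      intro d _
      rw [hsub, pow_add]
      ring
    rw [Finset.sum_congr rfl this, ← Finset.mul_sum, aux_alt m hm0, mul_zero]
end

section
/- Let n be a positive integer and let I, J be subsets of {1,…,n} with |I ∪ J| ≥ a, where a is an integer with 1 ≤ a ≤ ⌈n/2⌉. Then there do not exist real numbers y_1,…,y_n ∈ [0, 1/(n−a)] satisfying simultaneously y_1 + ⋯ + y_n > 1 + 2∑_{i∈I} y_i and y_1 + ⋯ + y_n > 1 + 2∑_{j∈J} y_j. -/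
/-- if `|I ∪ J| ≥ a` then there are no `y_i ∈ [0, 1/(n−a)]` with
`∑ y > 1 + 2∑_{i∈I} y_i` and `∑ y > 1 + 2∑_{j∈J} y_j` simultaneously. -/
theorem no_two_indicator_support (n a : ℕ) (hn : 1 ≤ n) (ha1 : 1 ≤ a)
    (ha2 : a ≤ (n + 1) / 2) (I J : Finset (Fin n)) (hIJ : a ≤ (I ∪ J).card) :
    ¬ ∃ y : Fin n → ℝ,
        (∀ i, y i ∈ Set.Icc (0 : ℝ) (1 / ((n : ℝ) - (a : ℝ))))
        ∧ (∑ i, y i > 1 + 2 * ∑ i ∈ I, y i)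
        ∧ (∑ i, y i > 1 + 2 * ∑ j ∈ J, y j) := by
  rintro ⟨y, hy, h1, h2⟩
  have hy0 : ∀ i, 0 ≤ y i := fun i => (hy i).1
  have hI0 : (0:ℝ) ≤ ∑ i ∈ I, y i := Finset.sum_nonneg fun i _ => hy0 i
  rcases le_or_gt n a with hna | hna
  · -- then 1/(n-a) ≤ 0, so all y = 0, contradicting ∑ y > 1
    have hle : (1:ℝ) / ((n:ℝ) - a) ≤ 0 := by
      rcases eq_or_lt_of_le hna with h | h
      · simp [h]
      · apply div_nonpos_of_nonneg_of_nonpos (by norm_num)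
        have : (n:ℝ) < a := by exact_mod_cast h
        linarith
    have hsum : ∑ i, y i ≤ 0 :=
      Finset.sum_nonpos fun i _ => le_trans (hy i).2 hle
    linarith
  · have hpos : (0:ℝ) < (n:ℝ) - a := by
      have : (a:ℝ) < n := by exact_mod_cast hna
      linarith
    have hsplit : ∑ i ∈ I ∪ J, y i + ∑ i ∈ (I ∪ J)ᶜ, y i = ∑ i, y i :=
      Finset.sum_add_sum_compl _ _
    have hunion : ∑ i ∈ I ∪ J, y i ≤ ∑ i ∈ I, y i + ∑ j ∈ J, y j := by
      have := Finset.sum_union_inter (s₁ := I) (s₂ := J) (f := y)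
      have h0 : (0:ℝ) ≤ ∑ i ∈ I ∩ J, y i := Finset.sum_nonneg fun i _ => hy0 i
      linarith
    have hcomp_gt : (1:ℝ) < ∑ i ∈ (I ∪ J)ᶜ, y i := by linarith
    have hcard : ((I ∪ J)ᶜ : Finset (Fin n)).card ≤ n - a := by
      have := Finset.card_compl (I ∪ J)
      simp only [Fintype.card_fin] at this
      omega
    have hcomp_le : ∑ i ∈ (I ∪ J)ᶜ, y i ≤ ((I ∪ J)ᶜ.card : ℝ) * (1 / ((n:ℝ) - a)) :=
      by
      simpa using Finset.sum_le_card_nsmul _ y _ fun i _ => (hy i).2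
    have hcastle : (((I ∪ J)ᶜ.card : ℝ)) ≤ (n:ℝ) - a := by
      have : (((I ∪ J)ᶜ.card : ℝ)) ≤ ((n - a : ℕ) : ℝ) := by exact_mod_cast hcard
      have hcast : ((n - a : ℕ) : ℝ) = (n:ℝ) - a := by
        have := Nat.cast_sub (le_of_lt hna) (R := ℝ)
        simpa using this
      linarith
    have : ∑ i ∈ (I ∪ J)ᶜ, y i ≤ 1 := by
      calc ∑ i ∈ (I ∪ J)ᶜ, y i ≤ ((I ∪ J)ᶜ.card : ℝ) * (1 / ((n:ℝ) - a)) := hcomp_le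
        _ ≤ ((n:ℝ) - a) * (1 / ((n:ℝ) - a)) := by
            apply mul_le_mul_of_nonneg_right hcastle (by positivity)
        _ = 1 := mul_one_div_cancel (ne_of_gt hpos)
    linarith
end

section
/- Let n, a be integers with 1 ≤ a ≤ ⌈n/2⌉ and n − a ≥ 1, and let I ⊆ {1,…,n}. There exist y_1,…,y_n ∈ [0, 1/(n−a)] with y_1 + ⋯ + y_n > 1 + 2∑_{i∈I} y_i if and only if |I| ≤ a − 1. -/
/-- there exist `y_i ∈ [0, 1/(n−a)]` with `∑ y > 1 + 2∑_{i∈I} y_i`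
if and only if `|I| ≤ a − 1`. -/
theorem valid_one_tuple_iff (n a : ℕ) (ha1 : 1 ≤ a) (ha2 : a ≤ (n + 1) / 2)
    (hna : 1 ≤ n - a) (I : Finset (Fin n)) :
    (∃ y : Fin n → ℝ,
        (∀ i, y i ∈ Set.Icc (0 : ℝ) (1 / ((n : ℝ) - (a : ℝ))))
        ∧ ∑ i, y i > 1 + 2 * ∑ i ∈ I, y i)
      ↔ I.card ≤ a - 1 := by
  have han : a < n := by omega
  set c : ℝ := (n : ℝ) - (a : ℝ) with hc
  have hc1 : (1 : ℝ) ≤ c := by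
    have : (a : ℝ) + 1 ≤ (n : ℝ) := by exact_mod_cast han
    linarith
  have hcpos : (0 : ℝ) < c := by linarith
  constructor
  · rintro ⟨y, hy, hsum⟩
    by_contra h
    have hIa : a ≤ I.card := by omega
    have hnonneg : ∀ i ∈ I, 0 ≤ y i := fun i _ => (hy i).1
    have hSI : 0 ≤ ∑ i ∈ I, y i := Finset.sum_nonneg hnonneg
    have hsplit : ∑ i, y i = ∑ i ∈ I, y i + ∑ i ∈ Iᶜ, y i :=
      (Finset.sum_add_sum_compl I y).symm
    have hcard : (Iᶜ.card : ℝ) ≤ c := by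
      have h1 : Iᶜ.card = n - I.card := by
        simp [Finset.card_compl]
      have h2 : Iᶜ.card ≤ n - a := by omega
      have : (Iᶜ.card : ℝ) ≤ ((n - a : ℕ) : ℝ) := by exact_mod_cast h2
      rwa [Nat.cast_sub han.le] at this
    have hcompl : ∑ i ∈ Iᶜ, y i ≤ 1 := by
      calc ∑ i ∈ Iᶜ, y i ≤ ∑ _i ∈ Iᶜ, (1 / c) :=
            Finset.sum_le_sum (fun i _ => (hy i).2)
        _ = (Iᶜ.card : ℝ) * (1 / c) := by rw [Finset.sum_const, nsmul_eq_mul]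
        _ ≤ c * (1 / c) := by
            apply mul_le_mul_of_nonneg_right hcard
            positivity
        _ = 1 := by field_simp
    rw [hsplit] at hsum
    linarith
  · intro h
    have hIa : I.card < a := by omega
    refine ⟨fun i => if i ∈ I then 0 else 1 / c, fun i => ?_, ?_⟩
    · by_cases hi : i ∈ I <;> simp [hi] <;> positivity
    · have hsum : ∑ i, (if i ∈ I then (0:ℝ) else 1 / c) = (Iᶜ.card : ℝ) * (1 / c) := by
        rw [← Finset.sum_add_sum_compl I]
        rw [Finset.sum_ite_of_true (fun i hi => hi),
            Finset.sum_ite_of_false (fun i hi => by simpa using hi)]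
        simp [Finset.sum_const, nsmul_eq_mul]
      have hIsum : ∑ i ∈ I, (if i ∈ I then (0:ℝ) else 1 / c) = 0 := by
        rw [Finset.sum_ite_of_true (fun i hi => hi)]; simp
      rw [hsum, hIsum]
      have hcard : c + 1 ≤ (Iᶜ.card : ℝ) := by
        have h1 : Iᶜ.card = n - I.card := by simp [Finset.card_compl]
        have h2 : n - a + 1 ≤ Iᶜ.card := by omega
        have : ((n - a + 1 : ℕ) : ℝ) ≤ (Iᶜ.card : ℝ) := by exact_mod_cast h2
        rw [Nat.cast_add, Nat.cast_sub han.le] at this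
        simpa using this
      have : (Iᶜ.card : ℝ) * (1 / c) ≥ (c + 1) * (1 / c) := by
        apply mul_le_mul_of_nonneg_right hcard; positivity
      have h3 : (c + 1) * (1 / c) = 1 + 1 / c := by field_simp
      rw [h3] at this
      have : 1 + 1 / c > 1 := by
        have : 0 < 1 / c := by positivity
        linarith
      linarith
end

section
/- Let n ≥ 1, let a ≤ ⌈n/2⌉, and suppose real numbers (X̄(t))_{0 ≤ t ≤ a−1} and (X(ℓ))_{0 ≤ ℓ ≤ a−1} satisfy X̄(t) = 2^{t+1} ∑_{i=0}^{a−1−t} C(n−t, i) X(i+t) for all 0 ≤ t ≤ a−1. Then 2^{n−2} (−1)^n ∑_{t=0}^{a−1} (−1)^t C(n,t) X̄(t) = 2^{n−1} (−1)^n ∑_{ℓ=0}^{a−1} (−1)^{ℓ} C(n,ℓ) X(ℓ). -/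
lemma key_id (n l : ℕ) (hl : l ≤ n) :
    ∑ t ∈ Finset.range (l+1), (-2:ℝ)^t * (n.choose t : ℝ) * ((n-t).choose (l-t) : ℝ)
      = (-1:ℝ)^l * (n.choose l : ℝ) := by
  have hcong : ∀ t ∈ Finset.range (l+1), (-2:ℝ)^t * (n.choose t : ℝ) * ((n-t).choose (l-t) : ℝ)
      = (n.choose l : ℝ) * ((-2:ℝ)^t * (l.choose t : ℝ)) := by
    intro t ht
    have ht' : t ≤ l := Nat.lt_succ_iff.mp (Finset.mem_range.mp ht)
    have hc := congrArg (Nat.cast : ℕ → ℝ) (Nat.choose_mul (n := n) ht')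
    push_cast at hc
    linear_combination (-(-2:ℝ)^t) * hc
  rw [Finset.sum_congr rfl hcong, ← Finset.mul_sum]
  have hb : ∑ t ∈ Finset.range (l+1), (-2:ℝ)^t * (l.choose t : ℝ) = (-1:ℝ)^l := by
    have h1 := (add_pow (-2:ℝ) 1 l).symm
    simp only [one_pow, mul_one] at h1
    rw [h1]; norm_num
  rw [hb]; ring

/-- combinatorial content of Lemma 7.22. -/
theorem Xbar_to_X (n a : ℕ) (hn : 1 ≤ n) (ha : a ≤ (n + 1) / 2)
    (Xbar X : ℕ → ℝ)
    (h : ∀ t, t < a → Xbar t = 2 ^ (t + 1) *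
      ∑ i ∈ Finset.range (a - t), ((n - t).choose i : ℝ) * X (i + t)) :
    (2 : ℝ) ^ ((n : ℤ) - 2) * (-1 : ℝ) ^ n *
        ∑ t ∈ Finset.range a, (-1 : ℝ) ^ t * (n.choose t : ℝ) * Xbar t
      = (2 : ℝ) ^ ((n : ℤ) - 1) * (-1 : ℝ) ^ n *
        ∑ l ∈ Finset.range a, (-1 : ℝ) ^ l * (n.choose l : ℝ) * X l := by
  have han : a ≤ n := le_trans ha (by omega)
  have key : ∑ t ∈ Finset.range a, (-1:ℝ)^t * (n.choose t : ℝ) * Xbar t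
      = 2 * ∑ l ∈ Finset.range a, (-1:ℝ)^l * (n.choose l : ℝ) * X l := by
    calc ∑ t ∈ Finset.range a, (-1:ℝ)^t * (n.choose t : ℝ) * Xbar t
        = ∑ t ∈ Finset.range a, ∑ i ∈ Finset.range (a - t),
            (-1:ℝ)^t * (n.choose t : ℝ) * (2^(t+1) * (((n-t).choose i : ℝ) * X (i+t))) := by
          refine Finset.sum_congr rfl fun t ht => ?_
          rw [h t (Finset.mem_range.mp ht)]
          simp only [Finset.mul_sum]
      _ = ∑ l ∈ Finset.range a, ∑ t ∈ Finset.range (l+1),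
            (-1:ℝ)^t * (n.choose t : ℝ) * (2^(t+1) * (((n-t).choose (l-t) : ℝ) * X l)) := by
          rw [Finset.sum_sigma', Finset.sum_sigma']
          refine Finset.sum_nbij' (fun p => ⟨p.2 + p.1, p.1⟩) (fun p => ⟨p.2, p.1 - p.2⟩)
            ?_ ?_ ?_ ?_ ?_
          · rintro ⟨t, i⟩ hp
            simp only [Finset.mem_sigma, Finset.mem_range] at hp ⊢
            omega
          · rintro ⟨l, t⟩ hp
            simp only [Finset.mem_sigma, Finset.mem_range] at hp ⊢
            omega
          · rintro ⟨t, i⟩ hp; simp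
          · rintro ⟨l, t⟩ hp
            simp only [Finset.mem_sigma, Finset.mem_range] at hp
            simp only [Sigma.mk.inj_iff, heq_eq_eq]
            exact ⟨by omega, trivial⟩
          · rintro ⟨t, i⟩ hp
            simp only [Finset.mem_sigma, Finset.mem_range] at hp
            simp only [Nat.add_sub_cancel]
      _ = ∑ l ∈ Finset.range a, 2 * ((-1:ℝ)^l * (n.choose l : ℝ) * X l) := by
          refine Finset.sum_congr rfl fun l hl => ?_
          have hln : l ≤ n := le_trans (Nat.le_of_lt_succ (Nat.lt_succ_of_lt
            (Finset.mem_range.mp hl))) han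
          have := key_id n l hln
          calc ∑ t ∈ Finset.range (l+1),
                (-1:ℝ)^t * (n.choose t : ℝ) * (2^(t+1) * (((n-t).choose (l-t) : ℝ) * X l))
              = (2 * X l) * ∑ t ∈ Finset.range (l+1),
                (-2:ℝ)^t * (n.choose t : ℝ) * ((n-t).choose (l-t) : ℝ) := by
                rw [Finset.mul_sum]
                refine Finset.sum_congr rfl fun t _ => ?_
                have h2t : (-2:ℝ)^t = (-1:ℝ)^t * 2^t := by rw [← neg_one_mul, mul_pow]
                rw [h2t, pow_succ]; ring
            _ = 2 * ((-1:ℝ)^l * (n.choose l : ℝ) * X l) := by rw [this]; ring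
    rw [← Finset.mul_sum]
  rw [key]
  have h2 : (2:ℝ) ^ ((n:ℤ) - 1) = (2:ℝ) ^ ((n:ℤ) - 2) * 2 := by
    rw [← zpow_add_one₀ (by norm_num : (2:ℝ) ≠ 0)]
    congr 1; omega
  rw [h2]; ring
end
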